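/- arXiv:2403.07310 — 2 statements merged into one kernel-verified Lean document; each statement's English description precedes it below -/
import Mathlib

section
/- Let φ be the sigmoid function. For every u ∈ ℝ and every ε > 0, there exist c > 0 and σ₀ > 0 such that for all σ ≥ σ₀: β₀(u,σ) − α₀(u,σ)² ≥ c · σ^{−(1+ε)}, i.e., E_{z∼N(u,1)}[φ'(σ·z)²] − (E_{z∼N(u,1)}[φ'(σ·z)])² ≥ c·σ^{−(1+ε)}. -/
open MeasureTheory ProbabilityTheory

/-- The sigmoid function `φ(x) = 1/(1 + exp(−x))`. -/
noncomputable def phi (x : ℝ) : ℝ := 1 / (1 + Real.exp (-x))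

/-- The derivative of the sigmoid, `φ' = φ(1−φ)`. -/
noncomputable def phi' (x : ℝ) : ℝ := phi x * (1 - phi x)

/-- `α_q(u,σ) = E_{z∼N(u,1)}[φ'(σ·z)·z^q]`. -/
noncomputable def alphaQ (q : ℕ) (u σ : ℝ) : ℝ :=
  ∫ z, phi' (σ * z) * z ^ q ∂(gaussianReal u 1)

/-- `β_q(u,σ) = E_{z∼N(u,1)}[φ'(σ·z)²·z^q]`. -/
noncomputable def betaQ (q : ℕ) (u σ : ℝ) : ℝ :=
  ∫ z, (phi' (σ * z)) ^ 2 * z ^ q ∂(gaussianReal u 1)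

open Real Set

lemma phi'_eq (x : ℝ) : phi' x = Real.exp (-x) / (1 + Real.exp (-x)) ^ 2 := by
  have h : 1 + Real.exp (-x) ≠ 0 := by positivity
  unfold phi' phi
  field_simp
  ring

lemma phi'_nonneg (x : ℝ) : 0 ≤ phi' x := by
  rw [phi'_eq]; positivity

lemma phi'_le_exp_neg (x : ℝ) : phi' x ≤ Real.exp (-x) := by
  rw [phi'_eq]
  exact div_le_self (Real.exp_pos _).le (by nlinarith [Real.exp_pos (-x)])

lemma phi'_le_exp (x : ℝ) : phi' x ≤ Real.exp x := by
  rw [phi'_eq, div_le_iff₀ (by positivity)]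
  have h : Real.exp x * Real.exp (-x) = 1 := by
    rw [← Real.exp_add]; simp
  nlinarith [Real.exp_pos x, Real.exp_pos (-x)]

lemma phi'_le_exp_neg_abs (x : ℝ) : phi' x ≤ Real.exp (-|x|) := by
  rcases le_total 0 x with h | h
  · rw [abs_of_nonneg h]; exact phi'_le_exp_neg x
  · rw [abs_of_nonpos h, neg_neg]; exact phi'_le_exp x

lemma phi'_ge {x : ℝ} (h0 : 0 ≤ x) (h1 : x ≤ 1) : Real.exp (-1) / 4 ≤ phi' x := by
  rw [phi'_eq]
  have he : Real.exp (-x) ≤ 1 := by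
    rw [← Real.exp_zero]; exact Real.exp_le_exp.2 (by linarith)
  refine div_le_div₀ (Real.exp_pos _).le ?_ (by positivity) (by nlinarith [Real.exp_pos (-x)])
  exact Real.exp_le_exp.2 (by linarith)

lemma continuous_phi' : Continuous phi' := by
  have hphi : Continuous phi := continuous_const.div
    (by continuity) (fun x => by positivity)
  exact hphi.mul (continuous_const.sub hphi)

lemma integral_gauss (u : ℝ) (f : ℝ → ℝ) :
    ∫ z, f z ∂(gaussianReal u 1) = ∫ z, gaussianPDFReal u 1 z * f z := by
  rw [gaussianReal_of_var_ne_zero u one_ne_zero]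
  have h : gaussianPDF u 1 = fun x => ((gaussianPDFReal u 1 x).toNNReal : ENNReal) := rfl
  rw [h, integral_withDensity_eq_integral_smul
    ((measurable_gaussianPDFReal u 1).real_toNNReal) f]
  congr 1
  ext z
  simp [NNReal.smul_def, Real.coe_toNNReal _ (gaussianPDFReal_nonneg u 1 z)]

lemma pdf_le_one (u z : ℝ) : gaussianPDFReal u 1 z ≤ 1 := by
  unfold gaussianPDFReal
  have h2π : (1:ℝ) ≤ Real.sqrt (2 * π * (1:NNReal)) := by
    rw [show ((1:NNReal):ℝ) = 1 by simp, mul_one]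
    rw [show (1:ℝ) = Real.sqrt 1 by simp]
    exact Real.sqrt_le_sqrt (by nlinarith [Real.pi_gt_three])
  have h1 : (Real.sqrt (2 * π * (1:NNReal)))⁻¹ ≤ 1 := by
    rw [inv_le_one_iff₀]; right; exact h2π
  have h2 : Real.exp (-(z - u) ^ 2 / (2 * (1:NNReal))) ≤ 1 := by
    rw [← Real.exp_zero]
    apply Real.exp_le_exp.2
    have : (0:ℝ) ≤ (z-u)^2 := sq_nonneg _
    have : ((1:NNReal):ℝ) = 1 := by simp
    rw [this]
    nlinarith [sq_nonneg (z-u)]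
  calc (Real.sqrt (2 * π * (1:NNReal)))⁻¹ * Real.exp (-(z - u) ^ 2 / (2 * (1:NNReal)))
      ≤ 1 * 1 := by
        apply mul_le_mul h1 h2 (Real.exp_pos _).le zero_le_one
    _ = 1 := by ring

lemma pdf_ge (u : ℝ) {z : ℝ} (h0 : 0 ≤ z) (h1 : z ≤ 1) :
    (Real.sqrt (2 * π))⁻¹ * Real.exp (-(1 + |u|) ^ 2 / 2) ≤ gaussianPDFReal u 1 z := by
  unfold gaussianPDFReal
  have hc : ((1:NNReal):ℝ) = 1 := by simp
  rw [hc, mul_one, mul_one]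
  apply mul_le_mul_of_nonneg_left _ (by positivity)
  apply Real.exp_le_exp.2
  apply div_le_div_of_nonneg_right ?_ (by norm_num)
  nlinarith [le_abs_self u, neg_abs_le u, abs_nonneg u]

lemma integrable_comp_abs' {f : ℝ → ℝ} (hf : IntegrableOn (fun x => f |x|) (Ioi 0)) :
    Integrable (fun x => f |x|) := by
  have int_Iic : IntegrableOn (fun x ↦ f |x|) (Iic 0) := by
    rw [← Measure.map_neg_eq_self (volume : Measure ℝ)]
    let m : MeasurableEmbedding fun x : ℝ => -x := (Homeomorph.neg ℝ).measurableEmbedding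
    rw [m.integrableOn_map_iff]
    simp_rw [Function.comp_def, abs_neg, neg_preimage, neg_Iic, neg_zero]
    exact (integrableOn_Ici_iff_integrableOn_Ioi).mpr hf
  have := int_Iic.union hf
  rwa [Iic_union_Ioi, integrableOn_univ] at this

lemma phi'_le_one (x : ℝ) : phi' x ≤ 1 :=
  (phi'_le_exp_neg_abs x).trans (Real.exp_le_one_iff.2 (neg_nonpos.2 (abs_nonneg x)))

theorem stmt_9 (u : ℝ) (ε : ℝ) (hε : 0 < ε) :
    ∃ c > 0, ∃ σ₀ > 0, ∀ σ : ℝ, σ₀ ≤ σ →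
      betaQ 0 u σ - (alphaQ 0 u σ) ^ 2 ≥ c * σ ^ (-(1 + ε)) := by
  set m : ℝ := (Real.sqrt (2 * π))⁻¹ * Real.exp (-(1 + |u|) ^ 2 / 2) with hm
  have hmpos : 0 < m := by positivity
  set c1 : ℝ := m * (Real.exp (-1) / 4) ^ 2 with hc1
  have hc1pos : 0 < c1 := by positivity
  refine ⟨c1 / 2, by positivity, max 1 (8 / c1),
    lt_of_lt_of_le one_pos (le_max_left _ _), ?_⟩
  intro σ hσ
  have hσ1 : (1:ℝ) ≤ σ := le_trans (le_max_left _ _) hσ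
  have hσ8 : 8 / c1 ≤ σ := le_trans (le_max_right _ _) hσ
  have hσpos : 0 < σ := lt_of_lt_of_le one_pos hσ1
  -- alpha rewriting
  have hαeq : alphaQ 0 u σ = ∫ z, gaussianPDFReal u 1 z * phi' (σ * z) := by
    unfold alphaQ
    rw [integral_gauss]
    simp
  have hα0 : 0 ≤ alphaQ 0 u σ := by
    rw [hαeq]
    exact integral_nonneg fun z => mul_nonneg (gaussianPDFReal_nonneg u 1 z) (phi'_nonneg _)
  have hexp_int : Integrable (fun z : ℝ => Real.exp (-(σ * |z|))) := by
    have h := integrable_comp_abs' (f := fun x => Real.exp (-(σ * x)))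
      (((exp_neg_integrableOn_Ioi 0 hσpos).congr_fun
        (fun x hx => by simp only [abs_of_pos (mem_Ioi.mp hx), neg_mul]) measurableSet_Ioi))
    exact h
  have hαle : alphaQ 0 u σ ≤ 2 / σ := by
    rw [hαeq]
    have hle : ∀ z : ℝ, gaussianPDFReal u 1 z * phi' (σ * z) ≤ Real.exp (-(σ * |z|)) := by
      intro z
      calc gaussianPDFReal u 1 z * phi' (σ * z) ≤ 1 * Real.exp (-|σ * z|) :=
            mul_le_mul (pdf_le_one u z) (phi'_le_exp_neg_abs _) (phi'_nonneg _) zero_le_one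
        _ = Real.exp (-(σ * |z|)) := by rw [one_mul, abs_mul, abs_of_pos hσpos]
    have hmono := integral_mono_of_nonneg
      (Filter.Eventually.of_forall fun z =>
        mul_nonneg (gaussianPDFReal_nonneg u 1 z) (phi'_nonneg _))
      hexp_int (Filter.Eventually.of_forall hle)
    refine hmono.trans ?_
    have h2 : ∫ z : ℝ, Real.exp (-(σ * |z|)) = 2 * ∫ x in Ioi (0:ℝ), Real.exp (-(σ * x)) :=
      integral_comp_abs (f := fun x => Real.exp (-(σ * x)))
    have h3 : ∫ x in Ioi (0:ℝ), Real.exp (-(σ * x)) = σ⁻¹ * Real.exp 0 := by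
      have h4 := integral_comp_mul_left_Ioi (fun x => Real.exp (-x)) 0 hσpos
      simp only [mul_zero] at h4
      rw [h4, integral_exp_neg_Ioi, smul_eq_mul]
      simp
    rw [h2, h3, Real.exp_zero, mul_one]
    exact le_of_eq (by rw [div_eq_mul_inv])
  -- beta rewriting
  have hβeq : betaQ 0 u σ = ∫ z, gaussianPDFReal u 1 z * phi' (σ * z) ^ 2 := by
    unfold betaQ
    rw [integral_gauss]
    simp
  have hβint : Integrable (fun z => gaussianPDFReal u 1 z * phi' (σ * z) ^ 2) := by
    have hb : ∀ x : ℝ, ‖phi' (σ * x) ^ 2‖ ≤ (1:ℝ) := fun x => by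
      rw [Real.norm_eq_abs, abs_of_nonneg (by positivity)]
      exact pow_le_one₀ (phi'_nonneg _) (phi'_le_one _)
    have h := (integrable_gaussianPDFReal u 1).bdd_mul
      (((continuous_phi'.comp (continuous_const.mul continuous_id)).pow 2).aestronglyMeasurable)
      (Filter.Eventually.of_forall hb)
    have heq : (fun z => gaussianPDFReal u 1 z * phi' (σ * z) ^ 2)
        = fun z => phi' (σ * z) ^ 2 * gaussianPDFReal u 1 z := by
      ext z; ring
    rw [heq]
    exact h
  have hsub : ∫ z in Icc (0:ℝ) σ⁻¹, gaussianPDFReal u 1 z * phi' (σ * z) ^ 2 ≤ betaQ 0 u σ := by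
    rw [hβeq]
    exact setIntegral_le_integral hβint (Filter.Eventually.of_forall fun z =>
      mul_nonneg (gaussianPDFReal_nonneg u 1 z) (sq_nonneg _))
  have hconst : c1 * σ⁻¹ ≤
      ∫ z in Icc (0:ℝ) σ⁻¹, gaussianPDFReal u 1 z * phi' (σ * z) ^ 2 := by
    have hvol : (volume (Icc (0:ℝ) σ⁻¹)).toReal = σ⁻¹ := by
      rw [Real.volume_Icc, ENNReal.toReal_ofReal (by rw [sub_zero]; positivity), sub_zero]
    have hbd : ∀ z ∈ Icc (0:ℝ) σ⁻¹, c1 ≤ gaussianPDFReal u 1 z * phi' (σ * z) ^ 2 := by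
      intro z hz
      obtain ⟨hz0, hz1⟩ := hz
      have hinv1 : σ⁻¹ ≤ 1 := by
        rw [inv_le_one_iff₀]
        right; exact hσ1
      have hz1' : z ≤ 1 := hz1.trans hinv1
      have hσz0 : 0 ≤ σ * z := mul_nonneg hσpos.le hz0
      have hσz1 : σ * z ≤ 1 := by
        calc σ * z ≤ σ * σ⁻¹ := mul_le_mul_of_nonneg_left hz1 hσpos.le
          _ = 1 := mul_inv_cancel₀ hσpos.ne'
      exact mul_le_mul (pdf_ge u hz0 hz1')
        (pow_le_pow_left₀ (by positivity) (phi'_ge hσz0 hσz1) 2)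
        (by positivity) (gaussianPDFReal_nonneg u 1 z)
    have h := setIntegral_ge_of_const_le_real (μ := volume) measurableSet_Icc
      (by rw [Real.volume_Icc]; exact ENNReal.ofReal_ne_top) hbd hβint.integrableOn
    rwa [measureReal_def, hvol] at h
  have hβge : c1 * σ⁻¹ ≤ betaQ 0 u σ := hconst.trans hsub
  have hα2 : (alphaQ 0 u σ) ^ 2 ≤ 4 / σ ^ 2 := by
    have h := pow_le_pow_left₀ hα0 hαle 2
    calc (alphaQ 0 u σ) ^ 2 ≤ (2 / σ) ^ 2 := h
      _ = 4 / σ ^ 2 := by rw [div_pow]; norm_num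
  have h8 : 8 ≤ σ * c1 := (div_le_iff₀ hc1pos).mp hσ8
  have h4 : 4 / σ ^ 2 ≤ c1 / 2 * σ⁻¹ := by
    rw [div_le_iff₀ (by positivity : (0:ℝ) < σ ^ 2)]
    have heq2 : c1 / 2 * σ⁻¹ * σ ^ 2 = c1 * σ / 2 := by
      field_simp
    rw [heq2]
    nlinarith
  have hrpow : σ ^ (-(1 + ε)) ≤ σ⁻¹ := by
    have h := Real.rpow_le_rpow_of_exponent_le hσ1 (show -(1+ε) ≤ (-1:ℝ) by linarith)
    rwa [Real.rpow_neg_one] at h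
  have key : c1 / 2 * σ⁻¹ ≤ betaQ 0 u σ - alphaQ 0 u σ ^ 2 := by
    linarith
  exact le_trans (mul_le_mul_of_nonneg_left hrpow (by positivity)) key
end

section
/- Let K ≥ 1, let a ∈ ℝ^K, let y ∈ {0,1}, and set H = (1/K)·Σ_{j=1}^K φ(a_j). Then 0 < H < 1, and the following bounds on the gradient and Hessian coefficients of the cross-entropy loss hold: (i) for every j, |(1/K)·(y − H)/(H·(1 − H))·φ'(a_j)| ≤ 1; (ii) for every j ≠ l, |(1/K²)·φ'(a_j)·φ'(a_l)·(H² + y − 2yH)/(H²·(1 − H)²)| ≤ 1; (iii) for every j, |(1/K²)·φ'(a_j)²·(H² + y − 2yH)/(H²·(1 − H)²) − (1/K)·φ''(a_j)·(y − H)/(H·(1 − H))| ≤ 2. -/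
/-- The second derivative of the sigmoid, `φ'' = φ(1−φ)(1−2φ)`. -/
noncomputable def phi'' (x : ℝ) : ℝ := phi x * (1 - phi x) * (1 - 2 * phi x)

lemma phi_pos (x : ℝ) : 0 < phi x := by
  unfold phi
  positivity

lemma phi_lt_one (x : ℝ) : phi x < 1 := by
  unfold phi
  rw [div_lt_one (by positivity)]
  linarith [Real.exp_pos (-x)]

lemma phi'_pos (x : ℝ) : 0 < phi' x :=
  mul_pos (phi_pos x) (by linarith [phi_lt_one x])

lemma abs_phi''_le (x : ℝ) : |phi'' x| ≤ phi' x := by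
  have h1 := phi_pos x
  have h2 := phi_lt_one x
  have hp' : 0 < phi' x := phi'_pos x
  have hrw : phi'' x = phi' x * (1 - 2 * phi x) := by unfold phi'' phi'; ring
  rw [hrw, abs_mul, abs_of_pos hp']
  calc phi' x * |1 - 2 * phi x| ≤ phi' x * 1 := by
        apply mul_le_mul_of_nonneg_left _ hp'.le
        rw [abs_le]; constructor <;> linarith
    _ = phi' x := mul_one _

theorem stmt_17 (K : ℕ) (hK : 1 ≤ K) (a : Fin K → ℝ) (y : ℝ) (hy : y = 0 ∨ y = 1)
    (H : ℝ) (hH : H = (1 / (K : ℝ)) * ∑ j, phi (a j)) :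
    (0 < H ∧ H < 1) ∧
    (∀ j, |(1 / (K : ℝ)) * ((y - H) / (H * (1 - H))) * phi' (a j)| ≤ 1) ∧
    (∀ j l, j ≠ l → |(1 / (K : ℝ) ^ 2) * phi' (a j) * phi' (a l) *
        ((H ^ 2 + y - 2 * y * H) / (H ^ 2 * (1 - H) ^ 2))| ≤ 1) ∧
    (∀ j, |(1 / (K : ℝ) ^ 2) * phi' (a j) ^ 2 *
          ((H ^ 2 + y - 2 * y * H) / (H ^ 2 * (1 - H) ^ 2)) -
        (1 / (K : ℝ)) * phi'' (a j) * ((y - H) / (H * (1 - H)))| ≤ 2) := by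
  have hK0 : (0 : ℝ) < K := by exact_mod_cast Nat.lt_of_lt_of_le Nat.zero_lt_one hK
  have hKne : (K : ℝ) ≠ 0 := ne_of_gt hK0
  have hne : Nonempty (Fin K) := ⟨⟨0, hK⟩⟩
  -- H bounds
  have hHpos : 0 < H := by
    rw [hH]
    apply mul_pos (by positivity)
    exact Finset.sum_pos (fun i _ => phi_pos _) Finset.univ_nonempty
  have hH1 : H < 1 := by
    rw [hH]
    have hsum : ∑ j, phi (a j) < ∑ _j : Fin K, (1 : ℝ) :=
      Finset.sum_lt_sum_of_nonempty Finset.univ_nonempty (fun i _ => phi_lt_one _)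
    have : ∑ _j : Fin K, (1 : ℝ) = K := by simp
    rw [this] at hsum
    calc (1 / (K : ℝ)) * ∑ j, phi (a j) < (1 / (K : ℝ)) * K := by
          apply mul_lt_mul_of_pos_left hsum (by positivity)
      _ = 1 := by field_simp
  have h1H : 0 < 1 - H := by linarith
  have hHne : H ≠ 0 := ne_of_gt hHpos
  have h1Hne : (1 : ℝ) - H ≠ 0 := ne_of_gt h1H
  -- key bounds on q j := (1/K) * phi' (a j)
  have hqpos : ∀ j, 0 < (1 / (K : ℝ)) * phi' (a j) := fun j => by
    have := phi'_pos (a j); positivity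
  have hqH : ∀ j, (1 / (K : ℝ)) * phi' (a j) ≤ H := by
    intro j
    have h1 := phi_pos (a j)
    have h2 := phi_lt_one (a j)
    have hle : phi' (a j) ≤ phi (a j) := by
      unfold phi'; nlinarith
    have hsingle : phi (a j) ≤ ∑ l, phi (a l) :=
      Finset.single_le_sum (fun i _ => (phi_pos (a i)).le) (Finset.mem_univ j)
    rw [hH]
    apply mul_le_mul_of_nonneg_left _ (by positivity)
    linarith
  have hq1H : ∀ j, (1 / (K : ℝ)) * phi' (a j) ≤ 1 - H := by
    intro j
    have h1 := phi_pos (a j)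
    have h2 := phi_lt_one (a j)
    have hle : phi' (a j) ≤ 1 - phi (a j) := by
      unfold phi'; nlinarith
    have hsingle : 1 - phi (a j) ≤ ∑ l, (1 - phi (a l)) :=
      Finset.single_le_sum (f := fun l => 1 - phi (a l))
        (fun i _ => by show (0:ℝ) ≤ 1 - phi (a i); linarith [phi_lt_one (a i)]) (Finset.mem_univ j)
    have hsum : ∑ l, (1 - phi (a l)) = K - ∑ l, phi (a l) := by
      rw [Finset.sum_sub_distrib]; simp
    have hHK : H = (1 / (K : ℝ)) * ∑ l, phi (a l) := hH
    have : (1 / (K : ℝ)) * phi' (a j) ≤ (1 / (K : ℝ)) * ((K : ℝ) - ∑ l, phi (a l)) := by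
      apply mul_le_mul_of_nonneg_left _ (by positivity)
      rw [← hsum]; linarith
    calc (1 / (K : ℝ)) * phi' (a j) ≤ (1 / (K : ℝ)) * ((K : ℝ) - ∑ l, phi (a l)) := this
      _ = 1 - H := by rw [hHK]; field_simp
  -- abbreviations
  refine ⟨⟨hHpos, hH1⟩, ?_, ?_, ?_⟩
  · -- gradient bound
    intro j
    rcases hy with rfl | rfl
    · have heq : (1 / (K : ℝ)) * ((0 - H) / (H * (1 - H))) * phi' (a j)
          = -(((1 / (K : ℝ)) * phi' (a j)) / (1 - H)) := by
        field_simp; ring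
      rw [heq, abs_neg, abs_of_nonneg (div_nonneg (hqpos j).le h1H.le), div_le_one h1H]
      exact hq1H j
    · have heq : (1 / (K : ℝ)) * ((1 - H) / (H * (1 - H))) * phi' (a j)
          = ((1 / (K : ℝ)) * phi' (a j)) / H := by
        field_simp
      rw [heq, abs_of_nonneg (div_nonneg (hqpos j).le hHpos.le), div_le_one hHpos]
      exact hqH j
  · -- off-diagonal Hessian bound
    intro j l _
    rcases hy with rfl | rfl
    · have heq : (1 / (K : ℝ) ^ 2) * phi' (a j) * phi' (a l) *
          ((H ^ 2 + 0 - 2 * 0 * H) / (H ^ 2 * (1 - H) ^ 2))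
          = (((1 / (K : ℝ)) * phi' (a j)) / (1 - H)) *
            (((1 / (K : ℝ)) * phi' (a l)) / (1 - H)) := by
        field_simp; ring
      rw [heq, abs_of_nonneg (mul_nonneg (div_nonneg (hqpos j).le h1H.le)
        (div_nonneg (hqpos l).le h1H.le))]
      have hb1 : ((1 / (K : ℝ)) * phi' (a j)) / (1 - H) ≤ 1 := by
        rw [div_le_one h1H]; exact hq1H j
      have hb2 : ((1 / (K : ℝ)) * phi' (a l)) / (1 - H) ≤ 1 := by
        rw [div_le_one h1H]; exact hq1H l
      nlinarith [hqpos j, hqpos l, div_nonneg (hqpos j).le h1H.le,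
        div_nonneg (hqpos l).le h1H.le]
    · have heq : (1 / (K : ℝ) ^ 2) * phi' (a j) * phi' (a l) *
          ((H ^ 2 + 1 - 2 * 1 * H) / (H ^ 2 * (1 - H) ^ 2))
          = (((1 / (K : ℝ)) * phi' (a j)) / H) *
            (((1 / (K : ℝ)) * phi' (a l)) / H) := by
        field_simp; ring
      rw [heq, abs_of_nonneg (mul_nonneg (div_nonneg (hqpos j).le hHpos.le)
        (div_nonneg (hqpos l).le hHpos.le))]
      have hb1 : ((1 / (K : ℝ)) * phi' (a j)) / H ≤ 1 := by
        rw [div_le_one hHpos]; exact hqH j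
      have hb2 : ((1 / (K : ℝ)) * phi' (a l)) / H ≤ 1 := by
        rw [div_le_one hHpos]; exact hqH l
      nlinarith [div_nonneg (hqpos j).le hHpos.le, div_nonneg (hqpos l).le hHpos.le]
  · -- diagonal Hessian bound
    intro j
    have hA : |(1 / (K : ℝ) ^ 2) * phi' (a j) ^ 2 *
        ((H ^ 2 + y - 2 * y * H) / (H ^ 2 * (1 - H) ^ 2))| ≤ 1 := by
      rcases hy with rfl | rfl
      · have heq : (1 / (K : ℝ) ^ 2) * phi' (a j) ^ 2 *
            ((H ^ 2 + 0 - 2 * 0 * H) / (H ^ 2 * (1 - H) ^ 2))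
            = (((1 / (K : ℝ)) * phi' (a j)) / (1 - H)) ^ 2 := by
          field_simp; ring
        rw [heq, abs_of_nonneg (by positivity)]
        have hb1 : ((1 / (K : ℝ)) * phi' (a j)) / (1 - H) ≤ 1 := by
          rw [div_le_one h1H]; exact hq1H j
        nlinarith [div_nonneg (hqpos j).le h1H.le]
      · have heq : (1 / (K : ℝ) ^ 2) * phi' (a j) ^ 2 *
            ((H ^ 2 + 1 - 2 * 1 * H) / (H ^ 2 * (1 - H) ^ 2))
            = (((1 / (K : ℝ)) * phi' (a j)) / H) ^ 2 := by
          field_simp; ring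
        rw [heq, abs_of_nonneg (by positivity)]
        have hb1 : ((1 / (K : ℝ)) * phi' (a j)) / H ≤ 1 := by
          rw [div_le_one hHpos]; exact hqH j
        nlinarith [div_nonneg (hqpos j).le hHpos.le]
    have hB : |(1 / (K : ℝ)) * phi'' (a j) * ((y - H) / (H * (1 - H)))| ≤ 1 := by
      have hbb := abs_phi''_le (a j)
      rcases hy with rfl | rfl
      · have heq : (1 / (K : ℝ)) * phi'' (a j) * ((0 - H) / (H * (1 - H)))
            = -(((1 / (K : ℝ)) * phi'' (a j)) / (1 - H)) := by
          field_simp; ring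
        rw [heq, abs_neg, abs_div, abs_of_pos h1H, div_le_one h1H, abs_mul,
          abs_of_nonneg (by positivity : (0:ℝ) ≤ 1 / (K : ℝ))]
        calc (1 / (K : ℝ)) * |phi'' (a j)| ≤ (1 / (K : ℝ)) * phi' (a j) := by
              apply mul_le_mul_of_nonneg_left hbb (by positivity)
          _ ≤ 1 - H := hq1H j
      · have heq : (1 / (K : ℝ)) * phi'' (a j) * ((1 - H) / (H * (1 - H)))
            = ((1 / (K : ℝ)) * phi'' (a j)) / H := by
          field_simp
        rw [heq, abs_div, abs_of_pos hHpos, div_le_one hHpos, abs_mul,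
          abs_of_nonneg (by positivity : (0:ℝ) ≤ 1 / (K : ℝ))]
        calc (1 / (K : ℝ)) * |phi'' (a j)| ≤ (1 / (K : ℝ)) * phi' (a j) := by
              apply mul_le_mul_of_nonneg_left hbb (by positivity)
          _ ≤ H := hqH j
    calc |(1 / (K : ℝ) ^ 2) * phi' (a j) ^ 2 *
          ((H ^ 2 + y - 2 * y * H) / (H ^ 2 * (1 - H) ^ 2)) -
        (1 / (K : ℝ)) * phi'' (a j) * ((y - H) / (H * (1 - H)))|
        ≤ |(1 / (K : ℝ) ^ 2) * phi' (a j) ^ 2 *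
          ((H ^ 2 + y - 2 * y * H) / (H ^ 2 * (1 - H) ^ 2))| +
          |(1 / (K : ℝ)) * phi'' (a j) * ((y - H) / (H * (1 - H)))| := abs_sub _ _
      _ ≤ 1 + 1 := add_le_add hA hB
      _ = 2 := by norm_num
end
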